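/- Let 𝔸 be the adele ring of ℚ, d ≥ 1, X = 𝔸^d/ℚ^d, and φ : 𝔸^d → X the canonical projection. Let V be a ℚ-linear subspace of ℚ^d. Write an adele vector a ∈ 𝔸^d as a = (a_∞, (a_p)_p) with a_∞ ∈ ℝ^d and a_p ∈ ℚ_p^d. Let V(ℝ) be the ℝ-span of V in ℝ^d, for each prime p let V(ℤ_p) be the ℤ_p-span in ℚ_p^d of V ∩ ℤ^d, and let V(𝔸) be the 𝔸-submodule of 𝔸^d generated by V. Then the intersection, over all finite sets S of primes, of the sets φ({a ∈ 𝔸^d : a_∞ ∈ V(ℝ), a_p ∈ V(ℤ_p) for p ∈ S, and a_p ∈ ℤ_p^d for p ∉ S}) is equal to φ(V(𝔸)). -/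

import Mathlib

set_option maxHeartbeats 1000000
set_option synthInstance.maxHeartbeats 400000


open NumberField IsDedekindDomain

/-- The diagonal embedding of `ℚ^d` into `𝔸^d`, where `𝔸` is the adele ring of `ℚ`. -/
noncomputable def diagEmb (d : ℕ) : (Fin d → ℚ) →+ (Fin d → AdeleRing (𝓞 ℚ) ℚ) where
  toFun := fun q i => algebraMap ℚ (AdeleRing (𝓞 ℚ) ℚ) (q i)
  map_zero' := by funext i; simp
  map_add' := by intro a b; funext i; simp

/-- `ℚ^d`, viewed as a subgroup of `𝔸^d` via the diagonal embedding. -/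
noncomputable def ratPoints (d : ℕ) : AddSubgroup (Fin d → AdeleRing (𝓞 ℚ) ℚ) :=
  (diagEmb d).range

/-- The adelic solenoid `X = 𝔸^d / ℚ^d`. -/
abbrev AdelicSolenoid (d : ℕ) := (Fin d → AdeleRing (𝓞 ℚ) ℚ) ⧸ ratPoints d

/-- `V (𝔸)`: the `𝔸`-submodule of `𝔸^d` generated by the (diagonal image of the)
`ℚ`-subspace `V` of `ℚ^d`. -/
noncomputable def adeleSpan (d : ℕ) (V : Submodule ℚ (Fin d → ℚ)) :
    Submodule (AdeleRing (𝓞 ℚ) ℚ) (Fin d → AdeleRing (𝓞 ℚ) ℚ) :=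
  Submodule.span (AdeleRing (𝓞 ℚ) ℚ) (diagEmb d '' (V : Set (Fin d → ℚ)))

/-- `φ (V (𝔸)) ⊆ X`, the image of `V (𝔸)` under the canonical projection
`φ : 𝔸^d → X = 𝔸^d / ℚ^d`. -/
noncomputable def solSub (d : ℕ) (V : Submodule ℚ (Fin d → ℚ)) :
    Set (AdelicSolenoid d) :=
  (QuotientAddGroup.mk : (Fin d → AdeleRing (𝓞 ℚ) ℚ) → AdelicSolenoid d) ''
    (adeleSpan d V : Set (Fin d → AdeleRing (𝓞 ℚ) ℚ))

/-- The component `a_∞ ∈ ℝ^d` (i.e. in the infinite adele component) of `a ∈ 𝔸^d`. -/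
def infPart (d : ℕ) (a : Fin d → AdeleRing (𝓞 ℚ) ℚ) : Fin d → InfiniteAdeleRing ℚ :=
  fun i => (show InfiniteAdeleRing ℚ × FiniteAdeleRing (𝓞 ℚ) ℚ from a i).1

/-- The component `a_p ∈ ℚ_p^d` of `a ∈ 𝔸^d` at the finite place (prime) `p = v`. -/
def finPart (d : ℕ) (v : HeightOneSpectrum (𝓞 ℚ)) (a : Fin d → AdeleRing (𝓞 ℚ) ℚ) :
    Fin d → v.adicCompletion ℚ :=
  fun i => ((show InfiniteAdeleRing ℚ × FiniteAdeleRing (𝓞 ℚ) ℚ from a i).2) v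

/-- `V (ℝ)`: the `ℝ`-span of `V` in `ℝ^d` (the infinite adele component of `𝔸^d`;
for `ℚ` there is a single infinite place, with completion `ℝ`). -/
noncomputable def infSpan (d : ℕ) (V : Submodule ℚ (Fin d → ℚ)) :
    Submodule (InfiniteAdeleRing ℚ) (Fin d → InfiniteAdeleRing ℚ) :=
  Submodule.span (InfiniteAdeleRing ℚ)
    ((fun q : Fin d → ℚ => fun i => algebraMap ℚ (InfiniteAdeleRing ℚ) (q i)) ''
      (V : Set (Fin d → ℚ)))

/-- `V (ℤ_p)`: the `ℤ_p`-span in `ℚ_p^d` of `V ∩ ℤ^d`, at the finite place `p = v`. -/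
noncomputable def intSpan (d : ℕ) (V : Submodule ℚ (Fin d → ℚ))
    (v : HeightOneSpectrum (𝓞 ℚ)) :
    Submodule (v.adicCompletionIntegers ℚ) (Fin d → v.adicCompletion ℚ) :=
  Submodule.span (v.adicCompletionIntegers ℚ)
    ((fun q : Fin d → ℚ => fun i => algebraMap ℚ (v.adicCompletion ℚ) (q i)) ''
      {q : Fin d → ℚ | q ∈ V ∧ ∀ i, ∃ m : ℤ, q i = (m : ℚ)})

/-- The set `{a ∈ 𝔸^d : a_∞ ∈ V (ℝ), a_p ∈ V (ℤ_p) for p ∈ S, a_p ∈ ℤ_p^d for p ∉ S}`,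
for a finite set `S` of primes (= finite places of `ℚ`). -/
def boxSet (d : ℕ) (V : Submodule ℚ (Fin d → ℚ))
    (S : Finset (HeightOneSpectrum (𝓞 ℚ))) : Set (Fin d → AdeleRing (𝓞 ℚ) ℚ) :=
  {a | infPart d a ∈ infSpan d V ∧
    (∀ v ∈ S, finPart d v a ∈ intSpan d V v) ∧
    (∀ v ∉ S, ∀ i : Fin d, finPart d v a i ∈ v.adicCompletionIntegers ℚ)}


section StrongApprox19

open IsDedekindDomain.HeightOneSpectrum



variable {R : Type*} [CommRing R] [IsDedekindDomain R] {K : Type*} [Field K]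
  [Algebra R K] [IsFractionRing R K]

-- density of K in adicCompletion
theorem dense_approx (v : HeightOneSpectrum R) (x : v.adicCompletion K) :
    ∃ r : K, Valued.v (x - algebraMap K (v.adicCompletion K) r) ≤ 1 := by
  letI := (v.adicValued (K := K)).toUniformSpace
  have hd : DenseRange (algebraMap K (v.adicCompletion K)) :=
    denseRange_algebraMap (K := K) (v := v)
  have hx : x ∈ closure (Set.range (algebraMap K (v.adicCompletion K))) := by
    rw [hd.closure_range]; trivial
  have hb : {y : v.adicCompletion K | Valued.v (y - x) < ((1 : (WithZero (Multiplicative ℤ))ˣ) : WithZero (Multiplicative ℤ))} ∈ nhds x := by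
    rw [Valued.mem_nhds]
    exact ⟨1, fun y hy => by
      simp only [Set.mem_setOf_eq, Units.val_one] at hy ⊢
      exact (Valuation.restrict_lt_one_iff _).mp hy⟩
  obtain ⟨y, hy1, r, rfl⟩ := (mem_closure_iff_nhds.mp hx _ hb)
  refine ⟨r, ?_⟩
  rw [algebraMap_adicCompletion]
  rw [Set.mem_setOf_eq] at hy1
  rw [← Valuation.map_neg, neg_sub]
  exact le_of_lt hy1

lemma exists_intVal (w : HeightOneSpectrum R) {b : R} (hb : b ≠ 0) :
    ∃ n : ℕ, w.intValuation b = Multiplicative.ofAdd (-(n : ℤ)) := by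
  have h0 : w.intValuationDef b ≠ 0 := by
    rw [w.intValuationDef_if_neg hb]
    exact WithZero.coe_ne_zero
  obtain ⟨m, hm⟩ := WithZero.ne_zero_iff_exists.mp h0
  have h1 : w.intValuationDef b ≤ 1 := w.intValuation_le_one b
  refine ⟨(-(Multiplicative.toAdd m)).toNat, ?_⟩
  rw [← hm] at h1
  rw [intValuation_apply, ← hm]
  have hm0 : Multiplicative.toAdd m ≤ 0 := by
    rwa [← WithZero.coe_one, WithZero.coe_le_coe, ← ofAdd_zero, ← ofAdd_toAdd m,
      Multiplicative.ofAdd_le] at h1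
  rw [Int.toNat_of_nonneg (by omega), neg_neg, ofAdd_toAdd]

theorem strong_approx (f : FiniteAdeleRing R K) :
    ∃ q : K, ∀ v : HeightOneSpectrum R,
      f v - algebraMap K (v.adicCompletion K) q ∈ v.adicCompletionIntegers K := by
  classical
  choose r hr using fun v : HeightOneSpectrum R => dense_approx v (f v)
  choose num den hden hrd using fun v : HeightOneSpectrum R =>
    IsFractionRing.div_surjective (A := R) (r v)
  have hfin : {v : HeightOneSpectrum R | f v ∉ v.adicCompletionIntegers K}.Finite :=
    Filter.eventually_cofinite.mp f.2
  set T : Finset (HeightOneSpectrum R) := hfin.toFinset with hT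
  set b : R := ∏ v ∈ T, den v with hbdef
  have hb0 : b ≠ 0 := by
    refine Finset.prod_ne_zero_iff.mpr fun v _ => ?_
    exact nonZeroDivisors.ne_zero (hden v)
  have hspan : Ideal.span {b} ≠ 0 := by
    rwa [Ne, Ideal.zero_eq_bot, Ideal.span_singleton_eq_bot]
  set F : Finset (HeightOneSpectrum R) := (Ideal.finite_factors hspan).toFinset with hF
  set S' : Finset (HeightOneSpectrum R) := T ∪ F with hS'
  choose n hn using fun w : HeightOneSpectrum R => exists_intVal w hb0
  set t : HeightOneSpectrum R → R :=
    fun w => if w ∈ T then num w * ∏ u ∈ T.erase w, den u else 0 with ht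
  obtain ⟨y, hy⟩ := IsDedekindDomain.exists_forall_sub_mem_ideal (s := S')
    (fun w => w.asIdeal) n (fun w _ => Ideal.prime_of_isPrime w.ne_bot w.isPrime)
    (fun i _ j _ hij => fun hh => hij (HeightOneSpectrum.ext hh))
    (fun w => t w.1)
  -- helper
  have hval : ∀ w : HeightOneSpectrum R, ∀ z : R, z ∈ w.asIdeal ^ n w →
      w.valuation K (algebraMap R K z) ≤ w.valuation K (algebraMap R K b) := by
    intro w z hz
    rw [valuation_of_algebraMap, valuation_of_algebraMap, hn w]
    rw [show ((Multiplicative.ofAdd (-(n w : ℤ)) : Multiplicative ℤ) : WithZero (Multiplicative ℤ))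
        = WithZero.exp (-(n w : ℤ)) from rfl, w.intValuation_le_pow_iff_dvd, Ideal.dvd_span_singleton]
    exact hz
  refine ⟨algebraMap R K y / algebraMap R K b, fun v => ?_⟩
  have hbK : algebraMap R K b ≠ 0 :=
    (map_ne_zero_iff _ (IsFractionRing.injective R K)).mpr hb0
  set q : K := algebraMap R K y / algebraMap R K b with hq
  have hdiv : ∀ z : R, z ∈ v.asIdeal ^ n v →
      v.valuation K (algebraMap R K z / algebraMap R K b) ≤ 1 := by
    intro z hz
    have h1 := hval v z hz
    have hb0' : v.valuation K (algebraMap R K b) ≠ 0 := by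
      simp [Valuation.ne_zero_iff, hbK]
    rw [map_div₀, div_le_one₀ (lt_of_le_of_ne zero_le' (Ne.symm hb0'))]
    exact h1
  by_cases hvT : v ∈ T
  · -- v is a bad place; use the approximation r v
    have h1 : Valued.v ((f v : v.adicCompletion K)
        - algebraMap K (v.adicCompletion K) (r v)) ≤ 1 := hr v
    set c : R := ∏ u ∈ T.erase v, den u with hc
    have hbfac : b = den v * c := (Finset.mul_prod_erase T den hvT).symm
    have hdK : algebraMap R K (den v) ≠ 0 :=
      (map_ne_zero_iff _ (IsFractionRing.injective R K)).mpr
        (nonZeroDivisors.ne_zero (hden v))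
    have hcK : algebraMap R K c ≠ 0 := by
      intro hcc
      apply hbK
      rw [hbfac, map_mul, hcc, mul_zero]
    have hrq : r v - q = algebraMap R K (num v * c - y) / algebraMap R K b := by
      rw [← hrd v, hq, hbfac, map_mul, map_sub, map_mul]
      field_simp
    have hz : num v * c - y ∈ v.asIdeal ^ n v := by
      have := hy v (Finset.mem_union_left _ hvT)
      have htv : t v = num v * c := by rw [ht]; simp [hvT, hc]
      rw [htv] at this
      simpa using neg_mem this
    have h2 : Valued.v (algebraMap K (v.adicCompletion K) (r v - q)) ≤ 1 := by
      have : Valued.v (algebraMap K (v.adicCompletion K) (r v - q)) = v.valuation K (r v - q) :=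
        valuedAdicCompletion_eq_valuation' v (r v - q)
      rw [this, hrq]
      exact hdiv _ hz
    rw [mem_adicCompletionIntegers]
    have hsplit : (f v : v.adicCompletion K) - algebraMap K (v.adicCompletion K) q
        = ((f v : v.adicCompletion K) - algebraMap K (v.adicCompletion K) (r v))
          + algebraMap K (v.adicCompletion K) (r v - q) := by
      rw [RingHom.map_sub]; ring
    rw [hsplit]
    exact le_trans (Valued.v.map_add _ _) (max_le h1 h2)
  · -- v is a good place
    have hf : (f v : v.adicCompletion K) ∈ v.adicCompletionIntegers K := by
      by_contra hcon
      exact hvT (hfin.mem_toFinset.mpr hcon)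
    have hqv : v.valuation K q ≤ 1 := by
      by_cases hvF : v ∈ F
      · have := hy v (Finset.mem_union_right _ hvF)
        have htv : t v = 0 := by rw [ht]; simp [hvT]
        rw [htv, sub_zero] at this
        exact hdiv y this
      · have hnd : ¬ v.asIdeal ∣ Ideal.span {b} := by
          intro hdd
          exact hvF ((Ideal.finite_factors hspan).mem_toFinset.mpr hdd)
        have hb1 : v.intValuationDef b = 1 :=
          le_antisymm (v.intValuation_le_one b)
            (not_lt.mp (fun hlt => hnd ((v.intValuation_lt_one_iff_dvd b).mp hlt)))
        rw [hq, map_div₀, valuation_of_algebraMap, valuation_of_algebraMap,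
          intValuation_apply, intValuation_apply, hb1, div_one]
        exact v.intValuation_le_one y
    have hqmem : algebraMap K (v.adicCompletion K) q ∈ v.adicCompletionIntegers K := by
      rw [mem_adicCompletionIntegers]
      have : Valued.v (algebraMap K (v.adicCompletion K) q) = v.valuation K q :=
        valuedAdicCompletion_eq_valuation' v q
      rw [this]
      exact hqv
    exact sub_mem hf hqmem

end StrongApprox19

namespace Stmt19Aux

open IsDedekindDomain.HeightOneSpectrum Set

noncomputable section

/-- valuation of an integer is at most one -/
lemma val_int_le_one (v : HeightOneSpectrum (𝓞 ℚ)) (m : ℤ) :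
    v.valuation ℚ (m : ℚ) ≤ 1 := by
  have h : (m : ℚ) = algebraMap (𝓞 ℚ) ℚ ((m : ℤ) : 𝓞 ℚ) := by
    rw [map_intCast]
  rw [h]
  exact v.valuation_le_one _

/-- valuation of the denominator of a `v`-integral rational is one -/
lemma val_den_eq_one (v : HeightOneSpectrum (𝓞 ℚ)) (q : ℚ)
    (h : v.valuation ℚ q ≤ 1) : v.valuation ℚ ((q.den : ℚ)) = 1 := by
  refine le_antisymm (by exact_mod_cast val_int_le_one v q.den) ?_
  by_contra hlt
  push_neg at hlt
  have hnum : v.valuation ℚ ((q.num : ℚ)) < 1 := by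
    have hd : ((q.den : ℚ)) ≠ 0 := by
      exact_mod_cast q.den_nz
    have hq : (q.num : ℚ) = q * (q.den : ℚ) := by
      have h0 := Rat.num_div_den q
      rw [div_eq_iff hd] at h0
      rw [h0]
    rw [hq, Valuation.map_mul]
    calc v.valuation ℚ q * v.valuation ℚ ((q.den : ℚ))
        ≤ 1 * v.valuation ℚ ((q.den : ℚ)) := mul_le_mul_left h _
      _ = v.valuation ℚ ((q.den : ℚ)) := one_mul _
      _ < 1 := hlt
  have hcop : IsCoprime (q.num) ((q.den : ℤ)) := by
    rw [Int.isCoprime_iff_gcd_eq_one]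
    exact q.reduced
  obtain ⟨a, b, hab⟩ := hcop
  have h1 : (1 : ℚ) = (a : ℚ) * q.num + (b : ℚ) * q.den := by
    have := congrArg (fun z : ℤ => (z : ℚ)) hab
    push_cast at this
    linarith [this]
  have : (1 : (WithZero (Multiplicative ℤ))) < 1 := by
    calc (1 : (WithZero (Multiplicative ℤ))) = v.valuation ℚ (1 : ℚ) := (Valuation.map_one _).symm
      _ = v.valuation ℚ ((a : ℚ) * q.num + (b : ℚ) * q.den) := by rw [← h1]
      _ ≤ max (v.valuation ℚ ((a : ℚ) * q.num)) (v.valuation ℚ ((b : ℚ) * q.den)) :=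
          Valuation.map_add _ _ _
      _ < 1 := by
        rw [max_lt_iff, Valuation.map_mul, Valuation.map_mul]
        constructor
        · calc v.valuation ℚ ((a:ℚ)) * v.valuation ℚ ((q.num:ℚ))
              ≤ 1 * v.valuation ℚ ((q.num:ℚ)) := mul_le_mul_left (val_int_le_one v a) _
            _ = v.valuation ℚ ((q.num:ℚ)) := one_mul _
            _ < 1 := hnum
        · calc v.valuation ℚ ((b:ℚ)) * v.valuation ℚ ((q.den:ℚ))
              ≤ 1 * v.valuation ℚ ((q.den:ℚ)) := mul_le_mul_left (val_int_le_one v b) _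
            _ = v.valuation ℚ ((q.den:ℚ)) := one_mul _
            _ < 1 := hlt
  exact absurd this (lt_irrefl _)

variable (d : ℕ) (V : Submodule ℚ (Fin d → ℚ))

/-- the set of integer-entry vectors in `V` -/
abbrev Mset : Set (Fin d → ℚ) := {q : Fin d → ℚ | q ∈ V ∧ ∀ i, ∃ m : ℤ, q i = (m : ℚ)}

/-- common denominator of a rational vector -/
def cden (q : Fin d → ℚ) : ℕ := ∏ i, (q i).den

lemma cden_pos (q : Fin d → ℚ) : 0 < cden d q :=
  Finset.prod_pos fun i _ => (q i).pos

lemma cden_int (q : Fin d → ℚ) (i : Fin d) : ∃ m : ℤ, (cden d q : ℚ) * q i = (m : ℚ) := by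
  obtain ⟨k, hk⟩ : (q i).den ∣ cden d q := Finset.dvd_prod_of_mem _ (Finset.mem_univ i)
  refine ⟨k * (q i).num, ?_⟩
  have hd : (((q i).den : ℚ)) ≠ 0 := by
    exact_mod_cast (q i).den_nz
  have hq : ((q i).num : ℚ) = q i * ((q i).den : ℚ) := by
    have h0 := Rat.num_div_den (q i)
    rw [div_eq_iff hd] at h0
    rw [h0]
  rw [hk]
  push_cast
  rw [hq]
  ring

lemma cden_smul_mem (q : Fin d → ℚ) (hq : q ∈ V) : (cden d q : ℚ) • q ∈ Mset d V := by
  refine ⟨V.smul_mem _ hq, fun i => ?_⟩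
  obtain ⟨m, hm⟩ := cden_int d q i
  exact ⟨m, by simpa using hm⟩

lemma val_cden_eq_one (v : HeightOneSpectrum (𝓞 ℚ)) (q : Fin d → ℚ)
    (h : ∀ i, v.valuation ℚ (q i) ≤ 1) : v.valuation ℚ ((cden d q : ℚ)) = 1 := by
  have : ((cden d q : ℕ) : ℚ) = ∏ i, ((q i).den : ℚ) := by
    rw [cden]; push_cast; rfl
  rw [this, map_prod]
  exact Finset.prod_eq_one fun i _ => val_den_eq_one v (q i) (h i)

end
end Stmt19Aux

namespace Stmt19Aux

open IsDedekindDomain.HeightOneSpectrum Set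

noncomputable section

variable (d : ℕ) (V : Submodule ℚ (Fin d → ℚ))

/-- `Mset` as a `ℤ`-submodule. -/
def Msub : Submodule ℤ (Fin d → ℚ) where
  carrier := Mset d V
  add_mem' := by
    rintro a b ⟨haV, haZ⟩ ⟨hbV, hbZ⟩
    refine ⟨V.add_mem haV hbV, fun i => ?_⟩
    obtain ⟨m, hm⟩ := haZ i
    obtain ⟨m', hm'⟩ := hbZ i
    exact ⟨m + m', by simp [Pi.add_apply, hm, hm']⟩
  zero_mem' := ⟨V.zero_mem, fun i => ⟨0, by simp⟩⟩
  smul_mem' := by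
    rintro z a ⟨haV, haZ⟩
    refine ⟨?_, fun i => ?_⟩
    · have h : z • a = (z : ℚ) • a := (Int.cast_smul_eq_zsmul ℚ z a).symm
      show z • a ∈ V
      rw [h]
      exact V.smul_mem _ haV
    · obtain ⟨m, hm⟩ := haZ i
      refine ⟨z * m, ?_⟩
      show z • a i = ((z * m : ℤ) : ℚ)
      rw [hm, zsmul_eq_mul]
      push_cast
      ring

lemma exists_fin_gen : ∃ (k : ℕ) (w : Fin k → (Fin d → ℚ)),
    (∀ j, w j ∈ Mset d V) ∧ Submodule.span ℤ (Set.range w) = Msub d V := by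
  classical
  let g : (Fin d → ℤ) →ₗ[ℤ] (Fin d → ℚ) :=
    { toFun := fun x i => (x i : ℚ)
      map_add' := by intro x y; funext i; simp only [Pi.add_apply]; push_cast; ring
      map_smul' := by
        intro z x; funext i
        simp only [Pi.smul_apply, RingHom.id_apply, zsmul_eq_mul]
        push_cast
        ring }
  have hle : Msub d V ≤ LinearMap.range g := by
    rintro q ⟨hqV, hqZ⟩
    choose m hm using hqZ
    exact ⟨m, by funext i; exact (hm i).symm⟩
  have hfg : (Msub d V).FG := by
    have h2 : Submodule.map g (Submodule.comap g (Msub d V)) = Msub d V :=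
      Submodule.map_comap_eq_self hle
    rw [← h2]
    exact Submodule.FG.map _ (IsNoetherian.noetherian _)
  obtain ⟨s, hs⟩ := hfg
  have hsub : (s : Set (Fin d → ℚ)) ⊆ Mset d V := by
    intro x hx
    have : x ∈ Msub d V := by
      rw [← hs]
      exact Submodule.subset_span hx
    exact this
  refine ⟨s.card, fun j => (s.equivFin.symm j : Fin d → ℚ), fun j => hsub (s.equivFin.symm j).2, ?_⟩
  have hr : Set.range (fun j => ((s.equivFin.symm j : _) : Fin d → ℚ)) = (s : Set (Fin d → ℚ)) := by
    ext x
    constructor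
    · rintro ⟨j, rfl⟩
      exact (s.equivFin.symm j).2
    · intro hx
      exact ⟨s.equivFin ⟨x, hx⟩, by simp⟩
  rw [hr, hs]

/-- Generic diagonal embedding into a `ℚ`-algebra. -/
def diagA (A : Type*) [CommRing A] [Algebra ℚ A] : (Fin d → ℚ) →+ (Fin d → A) where
  toFun := fun q i => algebraMap ℚ A (q i)
  map_zero' := by funext i; simp
  map_add' := by intro a b; funext i; simp

lemma diagA_ratsmul (A : Type*) [CommRing A] [Algebra ℚ A] (c : ℚ) (q : Fin d → ℚ) :
    diagA d A (c • q) = algebraMap ℚ A c • diagA d A q := by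
  funext i
  show algebraMap ℚ A (c * q i) = algebraMap ℚ A c * algebraMap ℚ A (q i)
  rw [map_mul]

/-- Spans over any ring via any additive map only depend on the `ℤ`-span of the base set. -/
lemma span_transfer {M : Type*} [AddCommGroup M] {B : Type*} [Ring B] [Module B M]
    (g : (Fin d → ℚ) →+ M) {s t : Set (Fin d → ℚ)}
    (h : t ⊆ (Submodule.span ℤ s : Set (Fin d → ℚ))) :
    Submodule.span B (⇑g '' t) ≤ Submodule.span B (⇑g '' s) := by
  rw [Submodule.span_le]
  rintro _ ⟨q, hq, rfl⟩
  have hmem : q ∈ Submodule.span ℤ s := h hq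
  clear hq
  induction hmem using Submodule.span_induction with
  | mem x hx => exact Submodule.subset_span ⟨x, hx, rfl⟩
  | zero => rw [map_zero]; exact Submodule.zero_mem _
  | add x y _ _ hx hy => rw [map_add]; exact Submodule.add_mem _ hx hy
  | smul z x _ hx =>
      rw [AddMonoidHom.map_zsmul]
      exact (Submodule.span B (⇑g '' s)).toAddSubgroup.zsmul_mem hx z

/-- the span of the image of `V` equals the span of the image of `Mset` over `ℚ`-algebras -/
lemma span_V_eq_span_Mset (A : Type*) [CommRing A] [Algebra ℚ A] :
    Submodule.span A (⇑(diagA d A) '' (V : Set (Fin d → ℚ)))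
      = Submodule.span A (⇑(diagA d A) '' Mset d V) := by
  apply le_antisymm
  · rw [Submodule.span_le]
    rintro _ ⟨q, hqV, rfl⟩
    have hN : ((cden d q : ℚ)) ≠ 0 := by
      have := cden_pos d q
      positivity
    have hmem : (cden d q : ℚ) • q ∈ Mset d V := cden_smul_mem d V q hqV
    have heq : diagA d A q = algebraMap ℚ A ((cden d q : ℚ)⁻¹) • diagA d A ((cden d q : ℚ) • q) := by
      rw [diagA_ratsmul, smul_smul, ← map_mul, inv_mul_cancel₀ hN, map_one, one_smul]
    rw [heq]
    exact Submodule.smul_mem _ _ (Submodule.subset_span ⟨_, hmem, rfl⟩)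
  · exact Submodule.span_mono (Set.image_mono fun q hq => hq.1)

end
end Stmt19Aux

namespace Stmt19Aux

open IsDedekindDomain.HeightOneSpectrum Set

noncomputable section

variable (d : ℕ) (V : Submodule ℚ (Fin d → ℚ))

lemma infSpan_eq : infSpan d V
    = Submodule.span (InfiniteAdeleRing ℚ)
        (⇑(diagA d (InfiniteAdeleRing ℚ)) '' (V : Set (Fin d → ℚ))) := rfl

lemma intSpan_eq (v : HeightOneSpectrum (𝓞 ℚ)) : intSpan d V v
    = Submodule.span (v.adicCompletionIntegers ℚ)
        (⇑(diagA d (v.adicCompletion ℚ)) '' Mset d V) := rfl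

lemma adeleSpan_eq : adeleSpan d V
    = Submodule.span (AdeleRing (𝓞 ℚ) ℚ)
        (⇑(diagA d (AdeleRing (𝓞 ℚ) ℚ)) '' (V : Set (Fin d → ℚ))) := rfl

lemma infPart_add (a b : Fin d → AdeleRing (𝓞 ℚ) ℚ) :
    infPart d (a + b) = infPart d a + infPart d b := rfl

lemma finPart_add (v : HeightOneSpectrum (𝓞 ℚ)) (a b : Fin d → AdeleRing (𝓞 ℚ) ℚ) :
    finPart d v (a + b) = finPart d v a + finPart d v b := rfl

lemma infPart_diagEmb (q : Fin d → ℚ) :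
    infPart d (diagEmb d q) = diagA d (InfiniteAdeleRing ℚ) q := rfl

lemma finPart_diagEmb (v : HeightOneSpectrum (𝓞 ℚ)) (q : Fin d → ℚ) :
    finPart d v (diagEmb d q) = diagA d (v.adicCompletion ℚ) q := rfl

lemma infPart_smul (c : AdeleRing (𝓞 ℚ) ℚ) (x : Fin d → AdeleRing (𝓞 ℚ) ℚ) :
    infPart d (c • x) = c.1 • infPart d x := rfl

lemma finPart_smul (v : HeightOneSpectrum (𝓞 ℚ)) (c : AdeleRing (𝓞 ℚ) ℚ) (x : Fin d → AdeleRing (𝓞 ℚ) ℚ) :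
    finPart d v (c • x) = (c.2 v) • finPart d v x := rfl

lemma mk_eq_mk_iff (a b : Fin d → AdeleRing (𝓞 ℚ) ℚ) :
    (QuotientAddGroup.mk a : AdelicSolenoid d) = QuotientAddGroup.mk b
      ↔ ∃ q : Fin d → ℚ, b = a + diagEmb d q := by
  rw [QuotientAddGroup.eq]
  constructor
  · rintro ⟨q, hq⟩
    exact ⟨q, by rw [hq]; abel⟩
  · rintro ⟨q, rfl⟩
    exact ⟨q, by abel⟩

lemma mem_integers_iff_val (v : HeightOneSpectrum (𝓞 ℚ)) (x : ℚ) :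
    algebraMap ℚ (v.adicCompletion ℚ) x ∈ v.adicCompletionIntegers ℚ ↔ v.valuation ℚ x ≤ 1 := by
  have h : Valued.v (algebraMap ℚ (v.adicCompletion ℚ) x) = v.valuation ℚ x :=
    valuedAdicCompletion_eq_valuation' v x
  rw [mem_adicCompletionIntegers, h]

lemma intSpan_le_integers (v : HeightOneSpectrum (𝓞 ℚ)) {x : Fin d → v.adicCompletion ℚ}
    (hx : x ∈ intSpan d V v) (i : Fin d) : x i ∈ v.adicCompletionIntegers ℚ := by
  let P : Submodule (v.adicCompletionIntegers ℚ) (Fin d → v.adicCompletion ℚ) :=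
    { carrier := {b | ∀ i, b i ∈ v.adicCompletionIntegers ℚ}
      add_mem' := fun ha hb j => add_mem (ha j) (hb j)
      zero_mem' := fun j => zero_mem _
      smul_mem' := by
        intro c b hb j
        have h : (c • b) j = (c : v.adicCompletion ℚ) * b j := rfl
        rw [h]
        exact mul_mem c.2 (hb j) }
  have hle : intSpan d V v ≤ P := by
    rw [intSpan]
    apply Submodule.span_le.mpr
    rintro _ ⟨q, ⟨hqV, hqZ⟩, rfl⟩ j
    obtain ⟨m, hm⟩ := hqZ j
    show algebraMap ℚ (v.adicCompletion ℚ) (q j) ∈ v.adicCompletionIntegers ℚ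
    rw [mem_integers_iff_val, hm]
    exact val_int_le_one v m
  exact hle hx i

lemma diag_mem_intSpan (v : HeightOneSpectrum (𝓞 ℚ)) (q : Fin d → ℚ) (hq : q ∈ V)
    (h : ∀ i, algebraMap ℚ (v.adicCompletion ℚ) (q i) ∈ v.adicCompletionIntegers ℚ) :
    diagA d (v.adicCompletion ℚ) q ∈ intSpan d V v := by
  have hval : ∀ i, v.valuation ℚ (q i) ≤ 1 := fun i => (mem_integers_iff_val v _).mp (h i)
  have hN1 : v.valuation ℚ ((cden d q : ℚ)) = 1 := val_cden_eq_one d v q hval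
  have hNne : ((cden d q : ℚ)) ≠ 0 := by
    have := cden_pos d q
    positivity
  have h1 : diagA d (v.adicCompletion ℚ) ((cden d q : ℚ) • q) ∈ intSpan d V v :=
    Submodule.subset_span ⟨_, cden_smul_mem d V q hq, rfl⟩
  have hαmem : algebraMap ℚ (v.adicCompletion ℚ) ((cden d q : ℚ)⁻¹)
      ∈ v.adicCompletionIntegers ℚ := by
    rw [mem_integers_iff_val, map_inv₀, hN1, inv_one]
  set α : v.adicCompletionIntegers ℚ := ⟨_, hαmem⟩ with hα
  have heq : diagA d (v.adicCompletion ℚ) q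
      = α • diagA d (v.adicCompletion ℚ) ((cden d q : ℚ) • q) := by
    funext i
    have hsmul : (α • diagA d (v.adicCompletion ℚ) ((cden d q : ℚ) • q)) i
        = (α : v.adicCompletion ℚ) * algebraMap ℚ (v.adicCompletion ℚ) ((cden d q : ℚ) * q i) :=
      rfl
    rw [hsmul, hα]
    show algebraMap ℚ (v.adicCompletion ℚ) (q i)
      = algebraMap ℚ (v.adicCompletion ℚ) ((cden d q : ℚ)⁻¹)
        * algebraMap ℚ (v.adicCompletion ℚ) ((cden d q : ℚ) * q i)
    rw [← map_mul]
    congr 1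
    field_simp
  rw [heq]
  exact Submodule.smul_mem _ _ h1

end
end Stmt19Aux

namespace Stmt19Aux

open IsDedekindDomain.HeightOneSpectrum Set

noncomputable section

variable (d : ℕ) (V : Submodule ℚ (Fin d → ℚ))

/-- extension of a `ℚ`-linear endomorphism of `ℚ^d` to `A^d` via its matrix -/
def matMap (A : Type*) [CommRing A] [Algebra ℚ A] (f : (Fin d → ℚ) →ₗ[ℚ] (Fin d → ℚ)) :
    (Fin d → A) →ₗ[A] (Fin d → A) where
  toFun x := fun i => ∑ j, x j * algebraMap ℚ A (f (fun k => if j = k then 1 else 0) i)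
  map_add' x y := by
    funext i
    simp [add_mul, Finset.sum_add_distrib]
  map_smul' c x := by
    funext i
    simp [Finset.mul_sum, mul_assoc]

lemma matMap_diag (A : Type*) [CommRing A] [Algebra ℚ A]
    (f : (Fin d → ℚ) →ₗ[ℚ] (Fin d → ℚ)) (q : Fin d → ℚ) :
    matMap d A f (diagA d A q) = diagA d A (f q) := by
  funext i
  show ∑ j, algebraMap ℚ A (q j) * algebraMap ℚ A (f (fun k => if j = k then 1 else 0) i)
      = algebraMap ℚ A (f q i)
  have hfq : f q i = ∑ j, q j * f (fun k => if j = k then 1 else 0) i := by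
    have h := LinearMap.pi_apply_eq_sum_univ f q
    have h2 := congrFun h i
    rw [h2, Finset.sum_apply]
    exact Finset.sum_congr rfl fun j _ => rfl
  rw [hfq, map_sum]
  exact Finset.sum_congr rfl fun j _ => by rw [map_mul]

lemma mem_of_diag_mem_infSpan (q : Fin d → ℚ)
    (h : diagA d (InfiniteAdeleRing ℚ) q ∈ infSpan d V) : q ∈ V := by
  obtain ⟨U, hU⟩ := Submodule.exists_isCompl V
  set f : (Fin d → ℚ) →ₗ[ℚ] (Fin d → ℚ) :=
    U.subtype.comp (U.linearProjOfIsCompl V hU.symm) with hf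
  have hker : LinearMap.ker f = V := by
    rw [hf, LinearMap.ker_comp, Submodule.ker_subtype]
    exact Submodule.linearProjOfIsCompl_ker hU.symm
  have hspan : infSpan d V ≤ LinearMap.ker (matMap d (InfiniteAdeleRing ℚ) f) := by
    rw [infSpan_eq, Submodule.span_le]
    rintro _ ⟨p, hpV, rfl⟩
    rw [SetLike.mem_coe, LinearMap.mem_ker, matMap_diag]
    have hp0 : f p = 0 := by
      rw [← LinearMap.mem_ker, hker]
      exact hpV
    rw [hp0, map_zero]
  have h0 : diagA d (InfiniteAdeleRing ℚ) (f q) = 0 := by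
    have h1 := hspan h
    rwa [LinearMap.mem_ker, matMap_diag] at h1
  have hfq : f q = 0 := by
    funext i
    have h2 : algebraMap ℚ (InfiniteAdeleRing ℚ) (f q i) = (0 : Fin d → InfiniteAdeleRing ℚ) i :=
      congrFun h0 i
    have hinj : Function.Injective (algebraMap ℚ (InfiniteAdeleRing ℚ)) :=
      RingHom.injective _
    apply hinj
    show algebraMap ℚ (InfiniteAdeleRing ℚ) (f q i) = algebraMap ℚ (InfiniteAdeleRing ℚ) 0
    rw [map_zero]
    exact h2
  rw [← hker]
  exact LinearMap.mem_ker.mpr hfq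

/-- evaluating a finite adele at a place, as an additive map -/
def evFA (v : HeightOneSpectrum (𝓞 ℚ)) : FiniteAdeleRing (𝓞 ℚ) ℚ →+ v.adicCompletion ℚ where
  toFun x := x v
  map_zero' := rfl
  map_add' x y := rfl

/-- assembling an adele vector from compatible local memberships -/
lemma mem_span_of_parts (k : ℕ) (w : Fin k → Fin d → ℚ) (a : Fin d → AdeleRing (𝓞 ℚ) ℚ)
    (hinf : ∃ c : Fin k → InfiniteAdeleRing ℚ,
      ∑ j, c j • diagA d (InfiniteAdeleRing ℚ) (w j) = infPart d a)
    (hfin : ∀ v : HeightOneSpectrum (𝓞 ℚ), ∃ c : Fin k → v.adicCompletionIntegers ℚ,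
      ∑ j, c j • diagA d (v.adicCompletion ℚ) (w j) = finPart d v a) :
    a ∈ Submodule.span (AdeleRing (𝓞 ℚ) ℚ) (⇑(diagEmb d) '' Set.range w) := by
  classical
  obtain ⟨cinf, hcinf⟩ := hinf
  choose cf hcf using hfin
  have hfa : ∀ j, ∀ᶠ v in Filter.cofinite,
      ((cf v j : v.adicCompletion ℚ)) ∈ v.adicCompletionIntegers ℚ := fun j =>
    Filter.Eventually.of_forall (fun v => (cf v j).2)
  set C : Fin k → AdeleRing (𝓞 ℚ) ℚ := fun j =>
    ((cinf j, ⟨fun v => (cf v j : _), hfa j⟩) : InfiniteAdeleRing ℚ × FiniteAdeleRing (𝓞 ℚ) ℚ)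
    with hC
  have key : a = ∑ j, C j • diagEmb d (w j) := by
    funext i
    have h1 : (∑ j, C j • diagEmb d (w j)) i = ∑ j, C j * diagEmb d (w j) i := by
      rw [Finset.sum_apply]
      exact Finset.sum_congr rfl fun j _ => rfl
    apply Prod.ext
    · have h2 : ((∑ j, C j * diagEmb d (w j) i : AdeleRing (𝓞 ℚ) ℚ)).1
          = ∑ j, cinf j * algebraMap ℚ (InfiniteAdeleRing ℚ) (w j i) := by
        erw [Prod.fst_sum]
        exact Finset.sum_congr rfl fun j _ => rfl
      have h3 : (a i).1 = ∑ j, cinf j * algebraMap ℚ (InfiniteAdeleRing ℚ) (w j i) := by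
        have h4 := congrFun hcinf i
        rw [Finset.sum_apply] at h4
        exact h4.symm
      rw [h1, h2, h3]
    · apply Subtype.ext
      funext v
      show ((a i).2 : FiniteAdeleRing (𝓞 ℚ) ℚ) v
          = (((∑ j, C j • diagEmb d (w j)) i).2 : FiniteAdeleRing (𝓞 ℚ) ℚ) v
      have h2 : ((((∑ j, C j * diagEmb d (w j) i : AdeleRing (𝓞 ℚ) ℚ)).2) :
            FiniteAdeleRing (𝓞 ℚ) ℚ) v
          = ∑ j, (cf v j : v.adicCompletion ℚ) * algebraMap ℚ (v.adicCompletion ℚ) (w j i) := by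
        calc ((((∑ j, C j * diagEmb d (w j) i : AdeleRing (𝓞 ℚ) ℚ)).2) :
              FiniteAdeleRing (𝓞 ℚ) ℚ) v
            = evFA v ((∑ j, C j * diagEmb d (w j) i : AdeleRing (𝓞 ℚ) ℚ)).2 := rfl
          _ = evFA v (∑ j, (C j * diagEmb d (w j) i).2) := by erw [Prod.snd_sum]
          _ = ∑ j, evFA v ((C j * diagEmb d (w j) i).2) := map_sum _ _ _
          _ = ∑ j, (cf v j : v.adicCompletion ℚ)
                * algebraMap ℚ (v.adicCompletion ℚ) (w j i) := rfl
      have h3 : ((a i).2 : FiniteAdeleRing (𝓞 ℚ) ℚ) v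
          = ∑ j, (cf v j : v.adicCompletion ℚ) * algebraMap ℚ (v.adicCompletion ℚ) (w j i) := by
        have h4 := congrFun (hcf v) i
        rw [Finset.sum_apply] at h4
        exact h4.symm
      rw [h1]
      exact h3.trans h2.symm
  rw [key]
  exact Submodule.sum_mem _ fun j _ =>
    Submodule.smul_mem _ _ (Submodule.subset_span ⟨w j, ⟨j, rfl⟩, rfl⟩)

end
end Stmt19Aux

namespace Stmt19Aux

open IsDedekindDomain.HeightOneSpectrum Set

noncomputable section

variable (d : ℕ) (V : Submodule ℚ (Fin d → ℚ))

def infPartHom : (Fin d → AdeleRing (𝓞 ℚ) ℚ) →+ (Fin d → InfiniteAdeleRing ℚ) where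
  toFun := infPart d
  map_zero' := rfl
  map_add' _ _ := rfl

def finPartHom (v : HeightOneSpectrum (𝓞 ℚ)) :
    (Fin d → AdeleRing (𝓞 ℚ) ℚ) →+ (Fin d → v.adicCompletion ℚ) where
  toFun := finPart d v
  map_zero' := rfl
  map_add' _ _ := rfl

lemma infPart_sum {ι : Type*} (s : Finset ι) (f : ι → (Fin d → AdeleRing (𝓞 ℚ) ℚ)) :
    infPart d (∑ i ∈ s, f i) = ∑ i ∈ s, infPart d (f i) :=
  map_sum (infPartHom d) f s

lemma finPart_sum (v : HeightOneSpectrum (𝓞 ℚ)) {ι : Type*} (s : Finset ι)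
    (f : ι → (Fin d → AdeleRing (𝓞 ℚ) ℚ)) :
    finPart d v (∑ i ∈ s, f i) = ∑ i ∈ s, finPart d v (f i) :=
  map_sum (finPartHom d v) f s

lemma diagEmb_ratsmul (c : ℚ) (q : Fin d → ℚ) :
    diagEmb d (c • q) = algebraMap ℚ (AdeleRing (𝓞 ℚ) ℚ) c • diagEmb d q :=
  diagA_ratsmul d (AdeleRing (𝓞 ℚ) ℚ) c q

/-- `Mset` is contained in the `ℤ`-span of the generators `w`, whenever the `ℤ`-span of
the generators is `Msub`. -/
lemma Mset_subset_zspan {k : ℕ} {w : Fin k → Fin d → ℚ}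
    (hwspan : Submodule.span ℤ (Set.range w) = Msub d V) :
    Mset d V ⊆ (Submodule.span ℤ (Set.range w) : Set (Fin d → ℚ)) := by
  intro q hq
  rw [hwspan]
  exact hq

lemma range_subset_zspan_Mset {k : ℕ} {w : Fin k → Fin d → ℚ}
    (hwM : ∀ j, w j ∈ Mset d V) :
    Set.range w ⊆ (Submodule.span ℤ (Mset d V) : Set (Fin d → ℚ)) := by
  rintro _ ⟨j, rfl⟩
  exact Submodule.subset_span (hwM j)

end
end Stmt19Aux

open Stmt19Aux

theorem stmt19 (d : ℕ) (hd : 1 ≤ d) (V : Submodule ℚ (Fin d → ℚ)) :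
    ⋂ S : Finset (HeightOneSpectrum (𝓞 ℚ)),
      ((QuotientAddGroup.mk : (Fin d → AdeleRing (𝓞 ℚ) ℚ) → AdelicSolenoid d) '' boxSet d V S)
      = solSub d V := by
  classical
  apply Set.Subset.antisymm
  · -- the intersection is contained in `φ (V(𝔸))`
    intro x hx
    rw [Set.mem_iInter] at hx
    obtain ⟨a, ha, hax⟩ := hx ∅
    obtain ⟨hainf, -, haint⟩ := ha
    obtain ⟨k, w, hwM, hwspan⟩ := exists_fin_gen d V
    have hfinv : ∀ v : HeightOneSpectrum (𝓞 ℚ), finPart d v a ∈ intSpan d V v := by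
      intro v
      obtain ⟨b, hb, hbx⟩ := hx {v}
      have heq : (QuotientAddGroup.mk b : AdelicSolenoid d) = QuotientAddGroup.mk a :=
        hbx.trans hax.symm
      obtain ⟨q, hq⟩ := (mk_eq_mk_iff d b a).mp heq
      have hbinf := hb.1
      have h1 : infPart d a = infPart d b + diagA d (InfiniteAdeleRing ℚ) q := by
        rw [hq, infPart_add, infPart_diagEmb]
      have hdiaginf : diagA d (InfiniteAdeleRing ℚ) q ∈ infSpan d V := by
        have h2 := hainf
        rw [h1] at h2
        have h3 := Submodule.sub_mem _ h2 hbinf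
        simpa using h3
      have hqV : q ∈ V := mem_of_diag_mem_infSpan d V q hdiaginf
      have hbint : finPart d v b ∈ intSpan d V v := hb.2.1 v (Finset.mem_singleton_self v)
      have hqint : ∀ i, algebraMap ℚ (v.adicCompletion ℚ) (q i)
          ∈ v.adicCompletionIntegers ℚ := by
        intro i
        have h4 : finPart d v a i
            = finPart d v b i + algebraMap ℚ (v.adicCompletion ℚ) (q i) := by
          rw [hq, finPart_add]
          rfl
        have h5 := haint v (Finset.notMem_empty v) i
        have h6 := intSpan_le_integers d V v hbint i
        have h7 : algebraMap ℚ (v.adicCompletion ℚ) (q i)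
            = finPart d v a i - finPart d v b i := by
          rw [h4]; ring
        rw [h7]
        exact sub_mem h5 h6
      have hqmem := diag_mem_intSpan d V v q hqV hqint
      have h8 : finPart d v a = finPart d v b + diagA d (v.adicCompletion ℚ) q := by
        rw [hq, finPart_add, finPart_diagEmb]
      rw [h8]
      exact Submodule.add_mem _ hbint hqmem
    -- assemble `a` as an element of the span over the adeles
    have haspan : a ∈ Submodule.span (AdeleRing (𝓞 ℚ) ℚ) (⇑(diagEmb d) '' Set.range w) := by
      apply mem_span_of_parts d k w a
      · have h1 : infPart d a ∈ Submodule.span (InfiniteAdeleRing ℚ)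
            (⇑(diagA d (InfiniteAdeleRing ℚ)) '' Set.range w) := by
          have h2 : infSpan d V ≤ Submodule.span (InfiniteAdeleRing ℚ)
              (⇑(diagA d (InfiniteAdeleRing ℚ)) '' Set.range w) := by
            rw [infSpan_eq, span_V_eq_span_Mset]
            exact span_transfer d _ (Mset_subset_zspan d V hwspan)
          exact h2 hainf
        rw [show ⇑(diagA d (InfiniteAdeleRing ℚ)) '' Set.range w
            = Set.range (fun j => diagA d (InfiniteAdeleRing ℚ) (w j)) from
            (Set.range_comp _ _).symm, Submodule.mem_span_range_iff_exists_fun] at h1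
        exact h1
      · intro v
        have h1 : finPart d v a ∈ Submodule.span (v.adicCompletionIntegers ℚ)
            (⇑(diagA d (v.adicCompletion ℚ)) '' Set.range w) := by
          have h2 : intSpan d V v ≤ Submodule.span (v.adicCompletionIntegers ℚ)
              (⇑(diagA d (v.adicCompletion ℚ)) '' Set.range w) := by
            rw [intSpan_eq]
            exact span_transfer d _ (Mset_subset_zspan d V hwspan)
          exact h2 (hfinv v)
        rw [show ⇑(diagA d (v.adicCompletion ℚ)) '' Set.range w
            = Set.range (fun j => diagA d (v.adicCompletion ℚ) (w j)) from
            (Set.range_comp _ _).symm, Submodule.mem_span_range_iff_exists_fun] at h1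
        exact h1
    refine ⟨a, ?_, hax⟩
    have hle : Submodule.span (AdeleRing (𝓞 ℚ) ℚ) (⇑(diagEmb d) '' Set.range w) ≤ adeleSpan d V := by
      apply Submodule.span_mono
      apply Set.image_mono
      rintro _ ⟨j, rfl⟩
      exact (hwM j).1
    exact hle haspan
  · -- `φ (V(𝔸))` is contained in each box image
    intro x hx
    rw [Set.mem_iInter]
    intro S
    obtain ⟨a, haspan, hax⟩ := hx
    have haspan' : a ∈ Submodule.span (AdeleRing (𝓞 ℚ) ℚ)
        (⇑(diagA d (AdeleRing (𝓞 ℚ) ℚ)) '' Mset d V) := by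
      rw [← span_V_eq_span_Mset]
      exact haspan
    obtain ⟨n, cc, gg, hsum⟩ := Submodule.mem_span_set'.mp haspan'
    have hmm : ∀ i, ∃ q ∈ Mset d V, diagA d (AdeleRing (𝓞 ℚ) ℚ) q = (gg i : Fin d → AdeleRing (𝓞 ℚ) ℚ) :=
      fun i => (gg i).2
    choose mm hmmM hmmE using hmm
    choose qk hqk using fun i =>
      strong_approx (R := 𝓞 ℚ) (K := ℚ) ((cc i).2)
    set e : Fin n → AdeleRing (𝓞 ℚ) ℚ := fun i => cc i - algebraMap ℚ (AdeleRing (𝓞 ℚ) ℚ) (qk i) with he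
    set b : Fin d → AdeleRing (𝓞 ℚ) ℚ := a - diagEmb d (∑ i, qk i • mm i) with hbdef
    have hbeq : b = ∑ i, e i • diagEmb d (mm i) := by
      rw [hbdef, ← hsum, map_sum]
      have h1 : ∀ i, diagEmb d (qk i • mm i)
          = algebraMap ℚ (AdeleRing (𝓞 ℚ) ℚ) (qk i) • diagEmb d (mm i) := fun i =>
        diagEmb_ratsmul d (qk i) (mm i)
      rw [Finset.sum_congr rfl fun i _ => h1 i, ← Finset.sum_sub_distrib]
      refine Finset.sum_congr rfl fun i _ => ?_
      rw [he]
      have h2 : (gg i : Fin d → AdeleRing (𝓞 ℚ) ℚ) = diagEmb d (mm i) := (hmmE i).symm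
      rw [h2, sub_smul]
    have hint : ∀ (v : HeightOneSpectrum (𝓞 ℚ)) (i : Fin n),
        ((e i).2 : FiniteAdeleRing (𝓞 ℚ) ℚ) v ∈ v.adicCompletionIntegers ℚ := by
      intro v i
      have h1 : ((e i).2 : FiniteAdeleRing (𝓞 ℚ) ℚ) v
          = ((cc i).2 : FiniteAdeleRing (𝓞 ℚ) ℚ) v
            - algebraMap ℚ (v.adicCompletion ℚ) (qk i) := rfl
      rw [h1]
      exact hqk i v
    have hbox : b ∈ boxSet d V S := by
      refine ⟨?_, ?_, ?_⟩
      · -- infinite part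
        have h1 : infPart d b = ∑ i, (e i).1 • diagA d (InfiniteAdeleRing ℚ) (mm i) := by
          rw [hbeq, infPart_sum]
          exact Finset.sum_congr rfl fun i _ => by
            rw [infPart_smul, infPart_diagEmb]
        rw [h1]
        apply Submodule.sum_mem
        intro i _
        apply Submodule.smul_mem
        rw [infSpan_eq, span_V_eq_span_Mset]
        exact Submodule.subset_span ⟨mm i, hmmM i, rfl⟩
      · -- places in S
        intro v _
        have h1 : finPart d v b
            = ∑ i, (((e i).2 : FiniteAdeleRing (𝓞 ℚ) ℚ) v) • diagA d (v.adicCompletion ℚ) (mm i) := by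
          rw [hbeq, finPart_sum]
          exact Finset.sum_congr rfl fun i _ => by
            rw [finPart_smul, finPart_diagEmb]
        rw [h1]
        apply Submodule.sum_mem
        intro i _
        have h2 : (((e i).2 : FiniteAdeleRing (𝓞 ℚ) ℚ) v) • diagA d (v.adicCompletion ℚ) (mm i)
            = (⟨_, hint v i⟩ : v.adicCompletionIntegers ℚ) • diagA d (v.adicCompletion ℚ) (mm i) := rfl
        rw [h2, intSpan_eq]
        exact Submodule.smul_mem _ _ (Submodule.subset_span ⟨mm i, hmmM i, rfl⟩)
      · -- places outside S
        intro v _ i0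
        have h1 : finPart d v b i0
            = ∑ i, (((e i).2 : FiniteAdeleRing (𝓞 ℚ) ℚ) v)
                * algebraMap ℚ (v.adicCompletion ℚ) (mm i i0) := by
          rw [hbeq, finPart_sum, Finset.sum_apply]
          exact Finset.sum_congr rfl fun i _ => rfl
        rw [h1]
        apply sum_mem
        intro i _
        apply mul_mem (hint v i)
        obtain ⟨m, hm⟩ := (hmmM i).2 i0
        rw [mem_integers_iff_val, hm]
        exact val_int_le_one v m
    refine ⟨b, hbox, ?_⟩
    have hq : (QuotientAddGroup.mk b : AdelicSolenoid d) = QuotientAddGroup.mk a := by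
      rw [mk_eq_mk_iff d b a]
      exact ⟨∑ i, qk i • mm i, by rw [hbdef]; abel⟩
    exact hq.trans hax
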